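/- For all integers p ≥ 0 and n ≥ 0, K(p,n) = ∫₀¹ (z(1-z))^((2p-1)/2) (z - 1/2)^(2n) dz = ((2p-1)!! · (2n-1)!! / (8^(p+n) · (p+n)!)) · π. -/

import Mathlib

open MeasureTheory Real

/-- The odd double factorial `(2p-1)!! = 1·3···(2p-1)`, with `(-1)!! = 1`. -/
noncomputable def oddDoubleFactorial (p : ℕ) : ℝ :=
  ∏ i ∈ Finset.range p, (2 * (i : ℝ) + 1)

lemma odf_succ (p : ℕ) :
    oddDoubleFactorial (p + 1) = oddDoubleFactorial p * (2 * (p : ℝ) + 1) := by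
  simp [oddDoubleFactorial, Finset.prod_range_succ]

lemma odf_eq (p : ℕ) :
    oddDoubleFactorial p * (2 ^ p * (p.factorial : ℝ)) = ((2 * p).factorial : ℝ) := by
  induction p with
  | zero => simp [oddDoubleFactorial]
  | succ p ih =>
    have h2 : ((2 * (p + 1)).factorial : ℝ)
        = (2 * (p : ℝ) + 2) * (2 * (p : ℝ) + 1) * ((2 * p).factorial : ℝ) := by
      have h : 2 * (p + 1) = (2 * p).succ.succ := by omega
      rw [h, Nat.factorial_succ, Nat.factorial_succ]
      push_cast
      ring
    have h3 : (((p + 1).factorial : ℕ) : ℝ) = ((p : ℝ) + 1) * (p.factorial : ℝ) := by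
      rw [Nat.factorial_succ]; push_cast; ring
    rw [odf_succ, h2, ← ih, h3]
    push_cast
    ring

lemma real_beta {a b : ℝ} (ha : 0 < a) (hb : 0 < b) :
    ∫ x in (0:ℝ)..1, x ^ (a - 1) * (1 - x) ^ (b - 1) =
      Real.Gamma a * Real.Gamma b / Real.Gamma (a + b) := by
  have h := Complex.Gamma_mul_Gamma_eq_betaIntegral (s := (a : ℂ)) (t := (b : ℂ))
    (by simpa using ha) (by simpa using hb)
  have hbeta : Complex.betaIntegral a b =
      ((∫ x in (0:ℝ)..1, x ^ (a - 1) * (1 - x) ^ (b - 1) : ℝ) : ℂ) := by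
    rw [← intervalIntegral.integral_ofReal, Complex.betaIntegral]
    refine intervalIntegral.integral_congr fun x hx => ?_
    rw [Set.uIcc_of_le zero_le_one] at hx
    rw [Complex.ofReal_mul, Complex.ofReal_cpow hx.1, Complex.ofReal_cpow (by linarith [hx.2])]
    push_cast
    ring
  rw [hbeta, ← Complex.ofReal_add, Complex.Gamma_ofReal, Complex.Gamma_ofReal,
    Complex.Gamma_ofReal, ← Complex.ofReal_mul, ← Complex.ofReal_mul] at h
  have h' := Complex.ofReal_inj.mp h
  have hG : Real.Gamma (a + b) ≠ 0 := (Real.Gamma_pos_of_pos (by linarith)).ne'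
  field_simp
  linarith [h']

lemma gamma_half (p : ℕ) :
    Real.Gamma ((p : ℝ) + 1 / 2)
      = Real.sqrt π * ((2 * p).factorial : ℝ) / (4 ^ p * (p.factorial : ℝ)) := by
  have h := Real.Gamma_mul_Gamma_add_half ((p : ℝ) + 1 / 2)
  rw [show (p : ℝ) + 1 / 2 + 1 / 2 = ((p : ℝ) + 1) by ring] at h
  rw [show 2 * ((p : ℝ) + 1 / 2) = ((2 * p : ℕ) : ℝ) + 1 by push_cast; ring] at h
  rw [Real.Gamma_nat_eq_factorial, Real.Gamma_nat_eq_factorial] at h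
  rw [show (1 : ℝ) - (((2 * p : ℕ) : ℝ) + 1) = -((2 * p : ℕ) : ℝ) by push_cast; ring,
    Real.rpow_neg (by norm_num : (0:ℝ) ≤ 2), Real.rpow_natCast,
    show (2:ℝ) ^ (2 * p) = 4 ^ p by rw [pow_mul]; norm_num] at h
  have hp : (p.factorial : ℝ) ≠ 0 := Nat.cast_ne_zero.mpr p.factorial_ne_zero
  have h4 : ((4:ℝ) ^ p) ≠ 0 := by positivity
  field_simp at h ⊢
  linear_combination h

lemma intble_half (e : ℝ) (he : -1 < e) :
    IntervalIntegrable (fun z : ℝ => (z * (1 - z)) ^ e) volume 0 (1/2) := by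
  have h1 : IntervalIntegrable (fun z : ℝ => z ^ e * (1 - z) ^ e) volume 0 (1/2) := by
    refine (intervalIntegral.intervalIntegrable_rpow' he).mul_continuousOn ?_
    refine ContinuousOn.rpow_const (by fun_prop) fun x hx => Or.inl ?_
    rw [Set.uIcc_of_le (by norm_num : (0:ℝ) ≤ 1/2)] at hx
    have := hx.2
    intro hc
    have : x = 1 := by linarith [sub_eq_zero.mp hc]
    linarith
  rw [intervalIntegrable_iff] at h1 ⊢
  refine h1.congr ?_
  filter_upwards [ae_restrict_mem measurableSet_uIoc] with x hx
  rw [Set.uIoc_of_le (by norm_num : (0:ℝ) ≤ 1/2)] at hx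
  exact (Real.mul_rpow hx.1.le (by linarith [hx.2])).symm

lemma intble_rpow (e : ℝ) (he : -1 < e) :
    IntervalIntegrable (fun z : ℝ => (z * (1 - z)) ^ e) volume 0 1 := by
  refine (intble_half e he).trans (a := 0) (b := 1/2) (c := 1) ?_
  have h2 := ((intble_half e he).comp_sub_left 1).symm
  have h2' : IntervalIntegrable (fun z : ℝ => (z * (1 - z)) ^ e) volume (1 - 1/2) (1 - 0) := by
    refine h2.congr ?_
    intro x _
    show ((1 - x) * (1 - (1 - x))) ^ e = _
    congr 1
    ring
  norm_num at h2'
  exact h2'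

lemma intble (p n : ℕ) : IntervalIntegrable
    (fun z : ℝ => (z * (1 - z)) ^ ((2 * (p : ℝ) - 1) / 2) * (z - 1/2) ^ (2 * n))
    volume 0 1 := by
  refine (intble_rpow _ ?_).mul_continuousOn ?_
  · have : (0:ℝ) ≤ (p : ℝ) := Nat.cast_nonneg p
    linarith
  exact (Continuous.continuousOn (by fun_prop))

lemma Kbase (p : ℕ) :
    ∫ z in (0:ℝ)..1, (z * (1 - z)) ^ ((2 * (p : ℝ) - 1) / 2) =
      oddDoubleFactorial p / (8 ^ p * (p.factorial : ℝ)) * π := by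
  have ha : (0:ℝ) < (p : ℝ) + 1 / 2 := by positivity
  have heq : Set.EqOn (fun z : ℝ => (z * (1 - z)) ^ ((2 * (p : ℝ) - 1) / 2))
      (fun z : ℝ => z ^ (((p : ℝ) + 1/2) - 1) * (1 - z) ^ (((p : ℝ) + 1/2) - 1))
      (Set.uIcc (0:ℝ) 1) := by
    intro z hz
    rw [Set.uIcc_of_le zero_le_one] at hz
    simp only
    rw [Real.mul_rpow hz.1 (by linarith [hz.2]),
      show (2 * (p : ℝ) - 1) / 2 = (p : ℝ) + 1/2 - 1 by ring]
  rw [intervalIntegral.integral_congr heq, real_beta ha ha]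
  rw [show (p : ℝ) + 1/2 + ((p : ℝ) + 1/2) = ((2 * p : ℕ) : ℝ) + 1 by push_cast; ring,
    Real.Gamma_nat_eq_factorial, gamma_half]
  have hodf : oddDoubleFactorial p = ((2 * p).factorial : ℝ) / (2 ^ p * (p.factorial : ℝ)) := by
    rw [← odf_eq]
    field_simp
  have hpp : Real.sqrt π * Real.sqrt π = π := Real.mul_self_sqrt pi_nonneg
  rw [hodf, show (4:ℝ) ^ p = 2 ^ (2 * p) by rw [show (4:ℝ) = 2 ^ 2 by norm_num, ← pow_mul],
    show (8:ℝ) ^ p = 2 ^ (3 * p) by rw [show (8:ℝ) = 2 ^ 3 by norm_num, ← pow_mul]]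
  conv_rhs => rw [← hpp]
  have hp : (p.factorial : ℝ) ≠ 0 := Nat.cast_ne_zero.mpr p.factorial_ne_zero
  have h2p : ((2 * p).factorial : ℝ) ≠ 0 := Nat.cast_ne_zero.mpr (2*p).factorial_ne_zero
  field_simp
  linear_combination

/-- For all integers `p, n ≥ 0`,
`∫₀¹ (z(1-z))^((2p-1)/2) (z - 1/2)^(2n) dz = ((2p-1)!!(2n-1)!!/(8^(p+n)(p+n)!)) π`. -/
theorem Kint_closed_form (p n : ℕ) :
    ∫ z in (0:ℝ)..1, (z * (1 - z)) ^ ((2 * (p : ℝ) - 1) / 2) * (z - 1/2) ^ (2 * n) =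
      oddDoubleFactorial p * oddDoubleFactorial n /
        (8 ^ (p + n) * ((p + n).factorial : ℝ)) * π := by
  induction n generalizing p with
  | zero =>
    simp only [Nat.mul_zero, pow_zero, mul_one, Nat.add_zero]
    rw [Kbase p]
    simp [oddDoubleFactorial]
  | succ n ih =>
    have key : Set.EqOn
        (fun z : ℝ => (z * (1 - z)) ^ ((2 * (p : ℝ) - 1) / 2) * (z - 1/2) ^ (2 * (n+1)))
        (fun z : ℝ => 1/4 * ((z * (1 - z)) ^ ((2 * (p : ℝ) - 1) / 2) * (z - 1/2) ^ (2 * n))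
          - (z * (1 - z)) ^ ((2 * ((p : ℝ) + 1) - 1) / 2) * (z - 1/2) ^ (2 * n))
        (Set.uIcc (0:ℝ) 1) := by
      intro z hz
      rw [Set.uIcc_of_le zero_le_one] at hz
      have hw : 0 ≤ z * (1 - z) := mul_nonneg hz.1 (by linarith [hz.2])
      simp only
      have h1 : (z * (1 - z)) ^ ((2 * ((p : ℝ) + 1) - 1) / 2)
          = (z * (1 - z)) ^ ((2 * (p : ℝ) - 1) / 2) * (z * (1 - z)) := by
        rw [show (2 * ((p : ℝ) + 1) - 1) / 2 = (2 * (p : ℝ) - 1) / 2 + 1 by ring]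
        rcases eq_or_lt_of_le hw with h | h
        · rw [← h, Real.zero_rpow
              (show (0:ℝ) < (2 * (p : ℝ) - 1) / 2 + 1 by
                have : (0:ℝ) ≤ (p : ℝ) := Nat.cast_nonneg p
                linarith).ne', mul_zero]
        · exact Real.rpow_add_one h.ne' _
      have h2 : (z - 1/2 : ℝ) ^ (2 * (n + 1))
          = (z - 1/2) ^ (2 * n) * (1/4 - z * (1 - z)) := by
        rw [show 2 * (n + 1) = 2 * n + 1 + 1 by ring, pow_succ, pow_succ]
        ring
      rw [h1, h2]
      ring
    have I2 := intble (p + 1) n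
    push_cast at I2
    rw [intervalIntegral.integral_congr key,
      intervalIntegral.integral_sub ((intble p n).const_mul _) I2,
      intervalIntegral.integral_const_mul, ih p]
    have ih2 := ih (p + 1)
    push_cast at ih2
    rw [ih2]
    have e1 := odf_succ p
    have e2 := odf_succ n
    have f1 : ((p + 1 + n).factorial : ℝ) = ((p : ℝ) + (n : ℝ) + 1) * ((p + n).factorial : ℝ) := by
      rw [show p + 1 + n = (p + n) + 1 by ring, Nat.factorial_succ]
      push_cast
      ring
    have f2 : ((p + (n + 1)).factorial : ℝ)
        = ((p : ℝ) + (n : ℝ) + 1) * ((p + n).factorial : ℝ) := by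
      rw [show p + (n + 1) = (p + n) + 1 by ring, Nat.factorial_succ]
      push_cast
      ring
    have g1 : ((8 : ℝ)) ^ (p + 1 + n) = 8 ^ (p + n) * 8 := by
      rw [show p + 1 + n = (p + n) + 1 by ring, pow_succ]
    have g2 : ((8 : ℝ)) ^ (p + (n + 1)) = 8 ^ (p + n) * 8 := by
      rw [show p + (n + 1) = (p + n) + 1 by ring, pow_succ]
    rw [e1, e2, f1, f2, g1, g2]
    have hf : ((p + n).factorial : ℝ) ≠ 0 := Nat.cast_ne_zero.mpr (p + n).factorial_ne_zero
    have h8 : ((8:ℝ)) ^ (p + n) ≠ 0 := by positivity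
    have hpn : ((p : ℝ) + (n : ℝ) + 1) ≠ 0 := by positivity
    field_simp
    ring
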